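/- arXiv:1302.3738 — 2 statements merged into one kernel-verified Lean document; each statement's English description precedes it below -/
import Mathlib

section
/- Let α > 0. Then H_α′(-c_α) = 0, and for every x ∈ (-c_α, ∞) one has Re(H_α′(x + i v_α(x))) = -α v_α(x) · (∂F/∂y)(x + i v_α(x)) > 0; in particular H_α′(z) ≠ 0 for every z = x + i v_α(x) with x ∈ (-c_α, ∞). -/
open MeasureTheory Set Filter

/-- `F(x+iy) = ∫₀^∞ t e^{-t}/((x-t)² + y²) dt`. -/
noncomputable def Fint (x y : ℝ) : ℝ :=
  ∫ t in Set.Ioi (0:ℝ), t * Real.exp (-t) / ((x - t)^2 + y^2)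

/-- `H_α(z) = z + α + α ∫₀^∞ t e^{-t}/(z-t) dt`. -/
noncomputable def Hfun (α : ℝ) (z : ℂ) : ℂ :=
  z + (α : ℂ) + (α : ℂ) * ∫ t in Set.Ioi (0:ℝ), ((t * Real.exp (-t) : ℝ) : ℂ) / (z - (t : ℂ))

lemma baseInt : IntegrableOn (fun t : ℝ => t * Real.exp (-t)) (Set.Ioi 0) := by
  have h := Real.GammaIntegral_convergent (by norm_num : (0:ℝ) < 2)
  refine h.congr_fun (fun x hx => ?_) measurableSet_Ioi
  beta_reduce; rw [show (2:ℝ) - 1 = 1 by norm_num, Real.rpow_one, mul_comm]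

lemma intA (x y : ℝ) (hy : 0 < y) :
    IntegrableOn (fun t : ℝ => t * Real.exp (-t) / ((x - t)^2 + y^2)) (Set.Ioi 0) := by
  refine Integrable.mono' (baseInt.div_const (y^2)) (by apply Measurable.aestronglyMeasurable; fun_prop) ?_
  refine (ae_restrict_iff' measurableSet_Ioi).2 (Eventually.of_forall fun t ht => ?_)
  have ht0 : (0:ℝ) < t := ht
  have hA : (0:ℝ) < (x - t)^2 + y^2 := by positivity
  rw [Real.norm_eq_abs, abs_div, abs_of_nonneg (by positivity), abs_of_pos hA]
  gcongr
  nlinarith [sq_nonneg (x - t)]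

lemma intA2 (x y : ℝ) (hy : 0 < y) :
    IntegrableOn (fun t : ℝ => t * Real.exp (-t) / (((x - t)^2 + y^2)^2)) (Set.Ioi 0) := by
  refine Integrable.mono' (baseInt.div_const ((y^2)^2)) (by apply Measurable.aestronglyMeasurable; fun_prop) ?_
  refine (ae_restrict_iff' measurableSet_Ioi).2 (Eventually.of_forall fun t ht => ?_)
  have ht0 : (0:ℝ) < t := ht
  have hA : (0:ℝ) < (x - t)^2 + y^2 := by positivity
  rw [Real.norm_eq_abs, abs_div, abs_of_nonneg (by positivity), abs_of_pos (by positivity)]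
  gcongr
  nlinarith [sq_nonneg (x - t)]

lemma intA2_pos (x y : ℝ) (hy : 0 < y) :
    0 < ∫ t in Set.Ioi (0:ℝ), t * Real.exp (-t) / (((x - t)^2 + y^2)^2) := by
  rw [setIntegral_pos_iff_support_of_nonneg_ae ?_ (intA2 x y hy)]
  · have hsub : Set.Ioi (0:ℝ) ⊆ Function.support (fun t : ℝ => t * Real.exp (-t) / (((x - t)^2 + y^2)^2)) := by
      intro t ht
      have ht0 : (0:ℝ) < t := ht
      have : (0:ℝ) < t * Real.exp (-t) / (((x - t)^2 + y^2)^2) := by positivity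
      exact ne_of_gt this
    rw [Set.inter_eq_self_of_subset_right hsub, Real.volume_Ioi]
    simp
  · refine (ae_restrict_iff' measurableSet_Ioi).2 (Eventually.of_forall fun t ht => ?_)
    have ht0 : (0:ℝ) < t := ht
    positivity

lemma hasDerivAt_Hint (z : ℂ) (δ : ℝ) (hδ : 0 < δ)
    (hb : ∀ w ∈ Metric.ball z δ, ∀ t ∈ Set.Ioi (0:ℝ), δ ≤ ‖w - (t:ℂ)‖) :
    Integrable (fun t : ℝ => -(((t * Real.exp (-t) : ℝ) : ℂ) / (z - (t:ℂ))^2))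
      (volume.restrict (Set.Ioi 0)) ∧
    HasDerivAt (fun w : ℂ => ∫ t in Set.Ioi (0:ℝ), ((t * Real.exp (-t) : ℝ) : ℂ) / (w - (t:ℂ)))
      (∫ t in Set.Ioi (0:ℝ), -(((t * Real.exp (-t) : ℝ) : ℂ) / (z - (t:ℂ))^2)) z := by
  have key := hasDerivAt_integral_of_dominated_loc_of_deriv_le (μ := volume.restrict (Set.Ioi (0:ℝ)))
    (F := fun (w : ℂ) (t : ℝ) => ((t * Real.exp (-t) : ℝ) : ℂ) / (w - (t:ℂ)))
    (F' := fun (w : ℂ) (t : ℝ) => -(((t * Real.exp (-t) : ℝ) : ℂ) / (w - (t:ℂ))^2))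
    (x₀ := z) (bound := fun t => t * Real.exp (-t) / δ^2) (Metric.ball_mem_nhds z hδ)
    (Eventually.of_forall fun w => (Measurable.aestronglyMeasurable (by fun_prop)))
    ?_ (Measurable.aestronglyMeasurable (by fun_prop)) ?_ (baseInt.div_const _) ?_
  · exact key
  · refine Integrable.mono' (baseInt.div_const δ) (Measurable.aestronglyMeasurable (by fun_prop)) ?_
    refine (ae_restrict_iff' measurableSet_Ioi).2 (Eventually.of_forall fun t ht => ?_)
    have ht0 : (0:ℝ) < t := ht
    have habs := hb z (Metric.mem_ball_self hδ) t ht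
    have h1 : (0:ℝ) < ‖z - (t:ℂ)‖ := lt_of_lt_of_le hδ habs
    rw [norm_div, Complex.norm_real, Real.norm_eq_abs, abs_of_nonneg (by positivity),
      show ‖z - (t:ℂ)‖ = ‖z - (t:ℂ)‖ from rfl]
    exact div_le_div_of_nonneg_left (by positivity) hδ habs
  · refine (ae_restrict_iff' measurableSet_Ioi).2 (Eventually.of_forall fun t ht => ?_)
    intro w hw
    have ht0 : (0:ℝ) < t := ht
    have habs := hb w hw t ht
    have h1 : (0:ℝ) < ‖w - (t:ℂ)‖ := lt_of_lt_of_le hδ habs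
    rw [norm_neg, norm_div, Complex.norm_real, norm_pow, Real.norm_eq_abs,
      abs_of_nonneg (by positivity : (0:ℝ) ≤ t * Real.exp (-t))]
    rw [show ‖w - (t:ℂ)‖ = ‖w - (t:ℂ)‖ from rfl]
    exact div_le_div_of_nonneg_left (by positivity) (by positivity)
      (pow_le_pow_left₀ hδ.le habs 2)
  · refine (ae_restrict_iff' measurableSet_Ioi).2 (Eventually.of_forall fun t ht => ?_)
    intro w hw
    have habs := hb w hw t ht
    have hne : w - (t:ℂ) ≠ 0 := by
      intro h
      rw [h] at habs
      simp at habs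
      linarith
    have h1 : HasDerivAt (fun w : ℂ => w - (t:ℂ)) 1 w := (hasDerivAt_id w).sub_const _
    have h2 := (hasDerivAt_const w (((t * Real.exp (-t) : ℝ) : ℂ))).div h1 hne
    convert h2 using 1
    · rfl
    · rfl
    · ring

lemma hasDerivAt_Fint (x y : ℝ) (hy : 0 < y) :
    HasDerivAt (fun y' => Fint x y')
      (∫ t in Set.Ioi (0:ℝ), (-2*y) * (t * Real.exp (-t) / (((x - t)^2 + y^2)^2))) y := by
  have key := hasDerivAt_integral_of_dominated_loc_of_deriv_le (μ := volume.restrict (Set.Ioi (0:ℝ)))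
    (F := fun (y' : ℝ) (t : ℝ) => t * Real.exp (-t) / ((x - t)^2 + y'^2))
    (F' := fun (y' : ℝ) (t : ℝ) => (-2*y') * (t * Real.exp (-t) / (((x - t)^2 + y'^2)^2)))
    (x₀ := y) (bound := fun t => (3*y) * (t * Real.exp (-t)) / (y/2)^4) (Metric.ball_mem_nhds y (half_pos hy))
    (Eventually.of_forall fun w => (Measurable.aestronglyMeasurable (by fun_prop)))
    (intA x y hy) (Measurable.aestronglyMeasurable (by fun_prop)) ?_
    (((baseInt.const_mul (3*y)).div_const ((y/2)^4)).congr (Eventually.of_forall fun t => by ring)) ?_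
  · exact key.2
  · refine (ae_restrict_iff' measurableSet_Ioi).2 (Eventually.of_forall fun t ht => ?_)
    intro y' hy'
    have ht0 : (0:ℝ) < t := ht
    have h1 : |y' - y| < y/2 := by simpa [Real.dist_eq] using hy'
    have hy'l : y/2 < y' := by cases abs_lt.1 h1; linarith
    have hy'u : y' < 3/2 * y := by cases abs_lt.1 h1; linarith
    have hy'0 : 0 < y' := lt_trans (half_pos hy) hy'l
    have hA : (y/2)^2 ≤ (x - t)^2 + y'^2 := by nlinarith [sq_nonneg (x - t)]
    rw [Real.norm_eq_abs, abs_mul, abs_of_nonneg (by positivity : (0:ℝ) ≤ t * Real.exp (-t) / (((x - t)^2 + y'^2)^2)),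
      abs_of_nonpos (by linarith : -2*y' ≤ 0)]
    have hA0 : (0:ℝ) < (x - t)^2 + y'^2 := by nlinarith
    calc -(-2*y') * (t * Real.exp (-t) / (((x - t)^2 + y'^2)^2))
        = 2*y' * (t * Real.exp (-t)) / (((x - t)^2 + y'^2)^2) := by ring
      _ ≤ 3*y * (t * Real.exp (-t)) / ((y/2)^2)^2 := by
          apply div_le_div₀ (by positivity)
          · exact mul_le_mul_of_nonneg_right (by linarith) (by positivity)
          · positivity
          · exact pow_le_pow_left₀ (by positivity) hA 2
      _ = 3*y * (t * Real.exp (-t)) / (y/2)^4 := by ring_nf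
  · refine (ae_restrict_iff' measurableSet_Ioi).2 (Eventually.of_forall fun t ht => ?_)
    intro y' hy'
    have h1 : |y' - y| < y/2 := by simpa [Real.dist_eq] using hy'
    have hy'l : y/2 < y' := by cases abs_lt.1 h1; linarith
    have hy'0 : 0 < y' := lt_trans (half_pos hy) hy'l
    have hA0 : (0:ℝ) < (x - t)^2 + y'^2 := by nlinarith [sq_nonneg (x - t)]
    have hg : HasDerivAt (fun y' : ℝ => (x - t)^2 + y'^2) (2*y') y' := by
      simpa using ((hasDerivAt_pow 2 y').const_add ((x - t)^2))
    have h2 := (hasDerivAt_const y' (t * Real.exp (-t))).div hg (ne_of_gt hA0)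
    convert h2 using 1
    · rfl
    · rfl
    · ring

/-- `H_α′(-c_α) = 0`, and for `x > -c_α`,
`Re(H_α′(x + i v_α(x))) = -α v_α(x) ∂F/∂y(x + i v_α(x)) > 0`; in particular
`H_α′ ≠ 0` on the curve away from `-c_α`. -/
theorem free_gamma_H_deriv_on_curve
    (α : ℝ) (hα : 0 < α) (c : ℝ) (hc : 0 < c)
    (hceq : (∫ t in Set.Ioi (0:ℝ), t * Real.exp (-t) / (c + t)^2) = 1/α)
    (v : ℝ → ℝ) (hv0 : ∀ x ≤ -c, v x = 0)
    (hvpos : ∀ x, -c < x → 0 < v x)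
    (hveq : ∀ x, -c < x → Fint x (v x) = 1/α)
    (hvuniq : ∀ x, -c < x → ∀ y, 0 < y → Fint x y = 1/α → y = v x) :
    deriv (Hfun α) ((-c : ℝ) : ℂ) = 0 ∧
    (∀ x : ℝ, -c < x →
      (deriv (Hfun α) ((x : ℂ) + (v x : ℝ) * Complex.I)).re
          = -α * v x * deriv (fun y => Fint x y) (v x) ∧
      0 < (deriv (Hfun α) ((x : ℂ) + (v x : ℝ) * Complex.I)).re ∧
      deriv (Hfun α) ((x : ℂ) + (v x : ℝ) * Complex.I) ≠ 0) := by
  have hα' : (α : ℝ) ≠ 0 := ne_of_gt hα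
  have hHfun : ∀ β : ℝ, Hfun β = fun w : ℂ =>
      w + (β:ℂ) + (β:ℂ) * ∫ t in Set.Ioi (0:ℝ), ((t * Real.exp (-t) : ℝ) : ℂ) / (w - (t:ℂ)) :=
    fun β => rfl
  constructor
  · -- derivative at -c vanishes
    have hb : ∀ w ∈ Metric.ball ((-c:ℝ):ℂ) (c/2), ∀ t ∈ Set.Ioi (0:ℝ),
        c/2 ≤ ‖w - (t:ℂ)‖ := by
      intro w hw t ht
      have ht0 : (0:ℝ) < t := ht
      have h1 : ‖w - ((-c:ℝ):ℂ)‖ < c/2 := by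
        simpa [Metric.mem_ball, Complex.dist_eq] using hw
      have h2 : |(w - ((-c:ℝ):ℂ)).re| ≤ ‖w - ((-c:ℝ):ℂ)‖ := Complex.abs_re_le_norm _
      have h3 : |w.re - (-c)| < c/2 := by
        have : (w - ((-c:ℝ):ℂ)).re = w.re - (-c) := by simp
        rw [← this]; exact lt_of_le_of_lt h2 h1
      have h4 : w.re < -c/2 := by
        rcases abs_lt.1 h3 with ⟨_, h⟩; linarith
      calc c/2 ≤ |(w - (t:ℂ)).re| := by
            simp only [Complex.sub_re, Complex.ofReal_re]
            rw [abs_of_nonpos (by linarith)]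
            linarith
        _ ≤ ‖w - (t:ℂ)‖ := Complex.abs_re_le_norm _
    obtain ⟨hint, hder⟩ := hasDerivAt_Hint ((-c:ℝ):ℂ) (c/2) (by linarith) hb
    have hH : HasDerivAt (Hfun α)
        (1 + (α:ℂ) * ∫ t in Set.Ioi (0:ℝ),
          -(((t * Real.exp (-t) : ℝ) : ℂ) / (((-c:ℝ):ℂ) - (t:ℂ))^2)) ((-c:ℝ):ℂ) := by
      rw [hHfun α]
      exact ((hasDerivAt_id (((-c:ℝ):ℂ))).add_const ((α:ℂ))).add (hder.const_mul (α:ℂ))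
    rw [hH.deriv]
    have hJ : (∫ t in Set.Ioi (0:ℝ), -(((t * Real.exp (-t) : ℝ) : ℂ) / (((-c:ℝ):ℂ) - (t:ℂ))^2))
        = ((-(1/α) : ℝ) : ℂ) := by
      have hpt : ∀ t : ℝ, -(((t * Real.exp (-t) : ℝ) : ℂ) / (((-c:ℝ):ℂ) - (t:ℂ))^2)
          = ((-(t * Real.exp (-t) / (c + t)^2) : ℝ) : ℂ) := by
        intro t; push_cast; ring
      rw [integral_congr_ae (Eventually.of_forall hpt),
        show (∫ t in Set.Ioi (0:ℝ), ((-(t * Real.exp (-t) / (c + t)^2) : ℝ) : ℂ))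
          = (((∫ t in Set.Ioi (0:ℝ), -(t * Real.exp (-t) / (c + t)^2)) : ℝ) : ℂ) from
          integral_ofReal, integral_neg, hceq]
    rw [hJ]
    have hαc : (α : ℂ) ≠ 0 := by exact_mod_cast hα'
    push_cast
    field_simp
    norm_num
  · -- on the curve
    intro x hx
    have hy : 0 < v x := hvpos x hx
    set y : ℝ := v x with hy_def
    set z : ℂ := (x:ℂ) + (y:ℝ) * Complex.I with hz_def
    have hzre : z.re = x := by simp [hz_def]
    have hzim : z.im = y := by simp [hz_def]
    have hb : ∀ w ∈ Metric.ball z (y/2), ∀ t ∈ Set.Ioi (0:ℝ),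
        y/2 ≤ ‖w - (t:ℂ)‖ := by
      intro w hw t ht
      have h1 : ‖w - z‖ < y/2 := by
        simpa [Metric.mem_ball, Complex.dist_eq] using hw
      have h2 : |(w - z).im| ≤ ‖w - z‖ := Complex.abs_im_le_norm _
      have h3 : |w.im - y| < y/2 := by
        have him : (w - z).im = w.im - y := by rw [Complex.sub_im, hzim]
        rw [← him]; exact lt_of_le_of_lt h2 h1
      have h4 : y/2 < w.im := by
        rcases abs_lt.1 h3 with ⟨h, _⟩; linarith
      calc y/2 ≤ |(w - (t:ℂ)).im| := by
            simp only [Complex.sub_im, Complex.ofReal_im, sub_zero]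
            rw [abs_of_pos (by linarith)]
            linarith
        _ ≤ ‖w - (t:ℂ)‖ := Complex.abs_im_le_norm _
    obtain ⟨hint, hder⟩ := hasDerivAt_Hint z (y/2) (half_pos hy) hb
    set J : ℂ := ∫ t in Set.Ioi (0:ℝ), -(((t * Real.exp (-t) : ℝ) : ℂ) / (z - (t:ℂ))^2) with hJ_def
    have hH : HasDerivAt (Hfun α) (1 + (α:ℂ) * J) z := by
      rw [hHfun α]
      exact ((hasDerivAt_id z).add_const ((α:ℂ))).add (hder.const_mul (α:ℂ))
    have hderiv_eq : deriv (Hfun α) z = 1 + (α:ℂ) * J := hH.deriv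
    set K : ℝ := ∫ t in Set.Ioi (0:ℝ), t * Real.exp (-t) / (((x - t)^2 + y^2)^2) with hK_def
    have hKpos : 0 < K := intA2_pos x y hy
    have hre : ∀ t : ℝ, (-(((t * Real.exp (-t) : ℝ) : ℂ) / (z - (t:ℂ))^2)).re
        = (2*y^2) * (t * Real.exp (-t) / (((x - t)^2 + y^2)^2))
          - t * Real.exp (-t) / ((x - t)^2 + y^2) := by
      intro t
      have hA0 : (0:ℝ) < (x - t)^2 + y^2 := by nlinarith [sq_nonneg (x - t)]
      have hwre : (z - (t:ℂ)).re = x - t := by rw [Complex.sub_re, hzre, Complex.ofReal_re]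
      have hwim : (z - (t:ℂ)).im = y := by rw [Complex.sub_im, hzim, Complex.ofReal_im, sub_zero]
      have h2re : ((z - (t:ℂ))^2).re = (x - t)^2 - y^2 := by
        rw [sq, Complex.mul_re, hwre, hwim]; ring
      have h2im : ((z - (t:ℂ))^2).im = 2*(x - t)*y := by
        rw [sq, Complex.mul_im, hwre, hwim]; ring
      have hnsq : Complex.normSq ((z - (t:ℂ))^2) = ((x - t)^2 + y^2)^2 := by
        rw [Complex.normSq_apply, h2re, h2im]; ring
      rw [Complex.neg_re, Complex.div_re, hnsq, h2re, Complex.ofReal_re, Complex.ofReal_im]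
      field_simp
      ring
    have hJre : J.re = 2*y^2 * K - Fint x y := by
      have h := integral_re hint
      simp only [RCLike.re_to_complex] at h
      rw [hJ_def, ← h, integral_congr_ae (Eventually.of_forall hre),
        integral_sub ((intA2 x y hy).const_mul (2*y^2)) (intA x y hy),
        MeasureTheory.integral_const_mul]
      rfl
    have hre_val : (deriv (Hfun α) z).re = 2*α*y^2*K := by
      rw [hderiv_eq]
      have : (1 + (α:ℂ) * J).re = 1 + α * J.re := by
        simp [Complex.add_re, Complex.mul_re]
      rw [this, hJre, hveq x hx]
      field_simp
      ring
    have hFderiv : deriv (fun y' => Fint x y') y = (-2*y) * K := by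
      rw [(hasDerivAt_Fint x y hy).deriv, MeasureTheory.integral_const_mul]
    refine ⟨?_, ?_, ?_⟩
    · rw [hre_val, hFderiv]; ring
    · rw [hre_val]
      exact mul_pos (by positivity) hKpos
    · intro h0
      have := hre_val
      rw [h0] at this
      simp only [Complex.zero_re] at this
      have h2 : 0 < 2*α*y^2*K := mul_pos (by positivity) hKpos
      linarith
end

section
/- Let α > 0. Then s_α = (c_α/(1 + c_α))·(α − c_α), and H_α″(-c_α) = 1 − s_α/c_α² < 0. -/
open MeasureTheory Set Filter

lemma cont_div_pow {c : ℝ} (hc : 0 < c) {g : ℝ → ℝ} (hg : Continuous g) (k : ℕ) :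
    ContinuousOn (fun t => g t / (c + t)^k) (Ici 0) := by
  apply hg.continuousOn.div (by fun_prop)
  intro t ht
  have h1 : (0:ℝ) < c + t := by have := ht.out; linarith
  positivity

lemma integrable_exp_div_pow {c : ℝ} (hc : 0 < c) (k : ℕ) :
    IntegrableOn (fun t => Real.exp (-t) / (c + t)^k) (Ioi 0) := by
  have he : IntegrableOn (fun t : ℝ => Real.exp (-t)) (Ioi 0) := by
    simpa using exp_neg_integrableOn_Ioi 0 (by norm_num : (0:ℝ) < 1)
  have hb : IntegrableOn (fun t => Real.exp (-t) * (c^k)⁻¹) (Ioi 0) := he.mul_const _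
  refine Integrable.mono' hb ?_ ?_
  · exact ((cont_div_pow hc (Real.continuous_exp.comp continuous_neg) k).mono
      Ioi_subset_Ici_self).aestronglyMeasurable measurableSet_Ioi
  · filter_upwards [ae_restrict_mem measurableSet_Ioi] with t ht
    have h1 : (0:ℝ) < c + t := by have := ht.out; linarith
    rw [Real.norm_eq_abs, abs_of_nonneg (by positivity), div_eq_mul_inv]
    gcongr
    linarith [ht.out]

lemma integrable_texp : IntegrableOn (fun t : ℝ => t * Real.exp (-t)) (Ioi 0) := by
  have := Real.GammaIntegral_convergent (by norm_num : (0:ℝ) < 2)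
  refine this.congr_fun (fun x hx => ?_) measurableSet_Ioi
  beta_reduce
  rw [show (2:ℝ) - 1 = 1 by norm_num, Real.rpow_one, mul_comm]

lemma integrable_texp_div_pow {c : ℝ} (hc : 0 < c) (k : ℕ) :
    IntegrableOn (fun t => t * Real.exp (-t) / (c + t)^k) (Ioi 0) := by
  have hb : IntegrableOn (fun t : ℝ => t * Real.exp (-t) * (c^k)⁻¹) (Ioi 0) :=
    integrable_texp.mul_const _
  refine Integrable.mono' hb ?_ ?_
  · exact ((cont_div_pow hc (continuous_id.mul (Real.continuous_exp.comp continuous_neg)) k).mono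
      Ioi_subset_Ici_self).aestronglyMeasurable measurableSet_Ioi
  · filter_upwards [ae_restrict_mem measurableSet_Ioi] with t ht
    have h0 : (0:ℝ) < t := ht.out
    have h1 : (0:ℝ) < c + t := by linarith
    rw [Real.norm_eq_abs, abs_of_nonneg (by positivity), div_eq_mul_inv]
    gcongr
    linarith

lemma tend_aux {g : ℝ → ℝ} (hg : Tendsto g atTop atTop) :
    Tendsto (fun t => -(Real.exp (-t) / g t)) atTop (nhds 0) := by
  have := (Real.tendsto_exp_neg_atTop_nhds_zero.mul hg.inv_tendsto_atTop).neg
  simpa [div_eq_mul_inv] using this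

lemma tend1 {c : ℝ} : Tendsto (fun t : ℝ => c + t) atTop atTop :=
  tendsto_atTop_add_const_left _ c tendsto_id

lemma parts1 {c : ℝ} (hc : 0 < c)
    (int1 : IntegrableOn (fun t => Real.exp (-t) / (c + t)) (Ioi 0))
    (int2 : IntegrableOn (fun t => Real.exp (-t) / (c + t)^2) (Ioi 0)) :
    (∫ t in Ioi (0:ℝ), Real.exp (-t) / (c + t)) +
      ∫ t in Ioi (0:ℝ), Real.exp (-t) / (c + t)^2 = 1/c := by
  have key : ∫ t in Ioi (0:ℝ), (Real.exp (-t) / (c + t) + Real.exp (-t) / (c + t)^2)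
      = 0 - (-(Real.exp (-(0:ℝ)) / (c + 0))) := by
    refine integral_Ioi_of_hasDerivAt_of_tendsto
      (f := fun t : ℝ => -(Real.exp (-t) / (c + t))) ?_ ?_ (int1.add int2) (tend_aux tend1)
    · apply ContinuousWithinAt.neg
      have hcont : ContinuousOn (fun t : ℝ => Real.exp (-t) / (c + t)) (Ici 0) := by
        apply (Real.continuous_exp.comp continuous_neg).continuousOn.div (by fun_prop)
        intro t ht
        have : (0:ℝ) < c + t := by have := ht.out; linarith
        positivity
      exact hcont.continuousWithinAt (by norm_num)
    · intro x hx
      have hx0 : (0:ℝ) < c + x := by have := hx.out; linarith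
      have h1 : HasDerivAt (fun t : ℝ => Real.exp (-t)) (Real.exp (-x) * (-1)) x :=
        ((hasDerivAt_id x).neg).exp
      have h2 : HasDerivAt (fun t : ℝ => c + t) 1 x := (hasDerivAt_id x).const_add c
      have hd : HasDerivAt (fun t : ℝ => -(Real.exp (-t) / (c + t))) _ x := (h1.div h2 (ne_of_gt hx0)).neg
      refine hd.congr_deriv ?_
      have hx1 : c + x ≠ 0 := ne_of_gt hx0
      field_simp
      ring
  rw [integral_add int1 int2] at key
  rw [key]
  norm_num

lemma parts2 {c : ℝ} (hc : 0 < c)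
    (int2 : IntegrableOn (fun t => Real.exp (-t) / (c + t)^2) (Ioi 0))
    (int3 : IntegrableOn (fun t => Real.exp (-t) / (c + t)^3) (Ioi 0)) :
    ((∫ t in Ioi (0:ℝ), Real.exp (-t) / (c + t)^2) / 2 +
      ∫ t in Ioi (0:ℝ), Real.exp (-t) / (c + t)^3) = 1/(2*c^2) := by
  have int2' : IntegrableOn (fun t => Real.exp (-t) / (2 * (c + t)^2)) (Ioi 0) := by
    refine IntegrableOn.congr_fun (int2.div_const 2) (fun x _ => ?_) measurableSet_Ioi
    show _ = _
    rw [div_div, mul_comm]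
  have key : ∫ t in Ioi (0:ℝ), (Real.exp (-t) / (2 * (c + t)^2) + Real.exp (-t) / (c + t)^3)
      = 0 - (-(Real.exp (-(0:ℝ)) / (2 * (c + 0)^2))) := by
    refine integral_Ioi_of_hasDerivAt_of_tendsto
      (f := fun t : ℝ => -(Real.exp (-t) / (2 * (c + t)^2))) ?_ ?_ (int2'.add int3)
      (tend_aux (((tendsto_pow_atTop two_ne_zero).comp (tend1 (c := c))).const_mul_atTop
        (by norm_num : (0:ℝ) < 2)))
    · apply ContinuousWithinAt.neg
      have hcont : ContinuousOn (fun t : ℝ => Real.exp (-t) / (2 * (c + t)^2)) (Ici 0) := by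
        apply (Real.continuous_exp.comp continuous_neg).continuousOn.div (by fun_prop)
        intro t ht
        have : (0:ℝ) < c + t := by have := ht.out; linarith
        positivity
      exact hcont.continuousWithinAt (by norm_num)
    · intro x hx
      have hx0 : (0:ℝ) < c + x := by have := hx.out; linarith
      have h1 : HasDerivAt (fun t : ℝ => Real.exp (-t)) (Real.exp (-x) * (-1)) x :=
        ((hasDerivAt_id x).neg).exp
      have h2 : HasDerivAt (fun t : ℝ => 2 * (c + t)^2)
          (2 * (↑2 * (c + x)^(2-1) * 1)) x :=
        (((hasDerivAt_id x).const_add c).pow 2).const_mul 2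
      have hd : HasDerivAt (fun t : ℝ => -(Real.exp (-t) / (2 * (c + t)^2))) _ x :=
        (h1.div h2 (by positivity)).neg
      refine hd.congr_deriv ?_
      have hx1 : c + x ≠ 0 := ne_of_gt hx0
      field_simp
      ring
  rw [integral_add int2' int3] at key
  have e1 : ∫ t in Ioi (0:ℝ), Real.exp (-t) / (2 * (c + t)^2)
      = (∫ t in Ioi (0:ℝ), Real.exp (-t) / (c + t)^2) / 2 := by
    rw [← integral_div]
    exact setIntegral_congr_fun measurableSet_Ioi (fun x _ => by rw [div_div, mul_comm])
  rw [e1] at key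
  rw [key]
  norm_num

lemma exp_integrableOn : IntegrableOn (fun t : ℝ => Real.exp (-t)) (Ioi 0) := by
  simpa using exp_neg_integrableOn_Ioi 0 (by norm_num : (0:ℝ) < 1)

lemma CSineq {c : ℝ} (hc : 0 < c)
    (int1 : IntegrableOn (fun t => Real.exp (-t) / (c + t)) (Ioi 0))
    (int2 : IntegrableOn (fun t => Real.exp (-t) / (c + t)^2) (Ioi 0))
    (I1 I2 : ℝ) (hI1 : (∫ t in Ioi (0:ℝ), Real.exp (-t) / (c + t)) = I1)
    (hI2 : (∫ t in Ioi (0:ℝ), Real.exp (-t) / (c + t)^2) = I2) :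
    I1^2 ≤ I2 := by
  have hnn : 0 ≤ ∫ t in Ioi (0:ℝ), Real.exp (-t) * (1/(c+t) - I1)^2 :=
    setIntegral_nonneg measurableSet_Ioi (fun t _ => by positivity)
  have hB : IntegrableOn (fun t => 2 * I1 * (Real.exp (-t) / (c + t))) (Ioi 0) :=
    int1.const_mul _
  have hC : IntegrableOn (fun t => I1^2 * Real.exp (-t)) (Ioi 0) :=
    exp_integrableOn.const_mul _
  have e1 : ∫ t in Ioi (0:ℝ), Real.exp (-t) * (1/(c+t) - I1)^2
      = ∫ t in Ioi (0:ℝ), (Real.exp (-t) / (c + t)^2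
          - 2 * I1 * (Real.exp (-t) / (c + t)) + I1^2 * Real.exp (-t)) := by
    refine setIntegral_congr_fun measurableSet_Ioi (fun t ht => ?_)
    have h1 : c + t ≠ 0 := by have := ht.out; positivity
    field_simp
    ring
  have hAB : IntegrableOn (fun t => Real.exp (-t) / (c + t)^2
      - 2 * I1 * (Real.exp (-t) / (c + t))) (Ioi 0) := int2.sub hB
  rw [e1, integral_add hAB hC, integral_sub int2 hB, integral_const_mul,
    integral_const_mul, integral_exp_neg_Ioi_zero, hI1, hI2] at hnn
  nlinarith [hnn]

lemma split_tdiv {c : ℝ} (hc : 0 < c)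
    (he : IntegrableOn (fun t : ℝ => Real.exp (-t)) (Ioi 0))
    (int1 : IntegrableOn (fun t => Real.exp (-t) / (c + t)) (Ioi 0)) :
    (∫ t in Ioi (0:ℝ), t * Real.exp (-t) / (c + t))
      = 1 - c * ∫ t in Ioi (0:ℝ), Real.exp (-t) / (c + t) := by
  rw [← integral_exp_neg_Ioi_zero, ← integral_const_mul, ← integral_sub he (int1.const_mul c)]
  refine setIntegral_congr_fun measurableSet_Ioi (fun t ht => ?_)
  have h1 : c + t ≠ 0 := by have := ht.out; positivity
  field_simp
  ring

lemma split_tdiv2 {c : ℝ} (hc : 0 < c)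
    (int1 : IntegrableOn (fun t => Real.exp (-t) / (c + t)) (Ioi 0))
    (int2 : IntegrableOn (fun t => Real.exp (-t) / (c + t)^2) (Ioi 0)) :
    (∫ t in Ioi (0:ℝ), t * Real.exp (-t) / (c + t)^2)
      = (∫ t in Ioi (0:ℝ), Real.exp (-t) / (c + t))
        - c * ∫ t in Ioi (0:ℝ), Real.exp (-t) / (c + t)^2 := by
  rw [← integral_const_mul, ← integral_sub int1 (int2.const_mul c)]
  refine setIntegral_congr_fun measurableSet_Ioi (fun t ht => ?_)
  have h1 : c + t ≠ 0 := by have := ht.out; positivity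
  field_simp
  ring

lemma split_tdiv3 {c : ℝ} (hc : 0 < c)
    (int2 : IntegrableOn (fun t => Real.exp (-t) / (c + t)^2) (Ioi 0))
    (int3 : IntegrableOn (fun t => Real.exp (-t) / (c + t)^3) (Ioi 0)) :
    (∫ t in Ioi (0:ℝ), t * Real.exp (-t) / (c + t)^3)
      = (∫ t in Ioi (0:ℝ), Real.exp (-t) / (c + t)^2)
        - c * ∫ t in Ioi (0:ℝ), Real.exp (-t) / (c + t)^3 := by
  rw [← integral_const_mul, ← integral_sub int2 (int3.const_mul c)]
  refine setIntegral_congr_fun measurableSet_Ioi (fun t ht => ?_)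
  have h1 : c + t ≠ 0 := by have := ht.out; positivity
  field_simp
  ring

lemma integrable_texp' : IntegrableOn (fun t : ℝ => t * Real.exp (-t)) (Ioi 0) := by
  have := Real.GammaIntegral_convergent (by norm_num : (0:ℝ) < 2)
  refine this.congr_fun (fun x hx => ?_) measurableSet_Ioi
  beta_reduce
  rw [show (2:ℝ) - 1 = 1 by norm_num, Real.rpow_one, mul_comm]

lemma ball_re {c : ℝ} (hc : 0 < c) {z : ℂ} (hz : z ∈ Metric.ball ((-c : ℝ) : ℂ) (c/2)) :
    z.re ≤ -c/2 := by
  have h1 : ‖z - ((-c:ℝ):ℂ)‖ < c/2 := by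
    simpa [Metric.mem_ball, Complex.dist_eq] using hz
  have h2 : |(z - ((-c:ℝ):ℂ)).re| ≤ ‖z - ((-c:ℝ):ℂ)‖ := Complex.abs_re_le_norm _
  have h3 : |z.re + c| < c/2 := by
    simpa using lt_of_le_of_lt h2 h1
  have := abs_lt.mp h3
  linarith [this.1, this.2]

lemma ball_lb {c : ℝ} (hc : 0 < c) {z : ℂ} (hz : z ∈ Metric.ball ((-c : ℝ) : ℂ) (c/2))
    {t : ℝ} (ht : 0 ≤ t) : c/2 ≤ ‖z - (t : ℂ)‖ := by
  have hre := ball_re hc hz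
  have h2 : |(z - (t:ℂ)).re| ≤ ‖z - (t:ℂ)‖ := Complex.abs_re_le_norm _
  have h3 : (z - (t:ℂ)).re = z.re - t := by simp
  rw [h3] at h2
  calc c/2 ≤ |z.re - t| := by rw [abs_sub_comm]; rw [abs_of_nonneg (by linarith)]; linarith
    _ ≤ _ := h2

lemma ball_ne {c : ℝ} (hc : 0 < c) {z : ℂ} (hz : z ∈ Metric.ball ((-c : ℝ) : ℂ) (c/2))
    {t : ℝ} (ht : 0 ≤ t) : z - (t : ℂ) ≠ 0 := by
  intro h
  have := ball_lb hc hz ht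
  rw [h] at this
  simp at this
  linarith

lemma cont_integrand {c : ℝ} (hc : 0 < c) {z : ℂ} (hz : z ∈ Metric.ball ((-c : ℝ) : ℂ) (c/2))
    (n : ℕ) (b : ℂ) :
    AEStronglyMeasurable (fun t : ℝ => b * ((t * Real.exp (-t) : ℝ) : ℂ) / (z - (t:ℂ))^n)
      (volume.restrict (Ioi 0)) := by
  refine ContinuousOn.aestronglyMeasurable ?_ measurableSet_Ioi
  apply ContinuousOn.div
  · fun_prop
  · fun_prop
  · intro t ht
    exact pow_ne_zero _ (ball_ne hc hz ht.out.le)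

lemma G_int {c : ℝ} (hc : 0 < c) {z : ℂ} (hz : z ∈ Metric.ball ((-c : ℝ) : ℂ) (c/2))
    (n : ℕ) (b : ℂ) :
    Integrable (fun t : ℝ => b * ((t * Real.exp (-t) : ℝ) : ℂ) / (z - (t:ℂ))^n)
      (volume.restrict (Ioi 0)) := by
  refine Integrable.mono'
    ((integrable_texp'.const_mul (‖b‖ * ((c/2)^n)⁻¹)) : Integrable _ _)
    (cont_integrand hc hz n b) ?_
  filter_upwards [ae_restrict_mem measurableSet_Ioi] with t ht
  have h0 : (0:ℝ) < t := ht.out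
  have hlb := ball_lb hc hz h0.le
  have hpos : (0:ℝ) < ‖z - (t:ℂ)‖ := lt_of_lt_of_le (by positivity) hlb
  rw [norm_div, norm_mul, norm_pow]
  have h1 : ‖((t * Real.exp (-t) : ℝ) : ℂ)‖ = t * Real.exp (-t) := by
    rw [Complex.norm_real, Real.norm_eq_abs, abs_of_nonneg (by positivity)]
  rw [h1, div_le_iff₀ (by positivity)]
  have h2 : (c/2)^n ≤ ‖z - (t:ℂ)‖^n := pow_le_pow_left₀ (by positivity) hlb n
  have hb : ‖b‖ = ‖b‖ := rfl
  rw [← hb]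
  calc ‖b‖ * (t * Real.exp (-t))
      = (‖b‖ * ((c/2)^n)⁻¹ * (t * Real.exp (-t))) * (c/2)^n := by
        field_simp
    _ ≤ (‖b‖ * ((c/2)^n)⁻¹ * (t * Real.exp (-t))) * ‖z - (t:ℂ)‖^n := by
        gcongr

lemma subset_ball {c : ℝ} {z : ℂ} (hz : z ∈ Metric.ball ((-c : ℝ) : ℂ) (c/2)) :
    Metric.ball z (c/2 - dist z ((-c:ℝ):ℂ)) ⊆ Metric.ball ((-c : ℝ) : ℂ) (c/2) := by
  intro x hx
  rw [Metric.mem_ball] at *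
  calc dist x ((-c:ℝ):ℂ) ≤ dist x z + dist z ((-c:ℝ):ℂ) := dist_triangle _ _ _
    _ < _ := by linarith

lemma G_hasDeriv {c : ℝ} (hc : 0 < c) {z : ℂ} (hz : z ∈ Metric.ball ((-c : ℝ) : ℂ) (c/2)) :
    HasDerivAt (fun w : ℂ => ∫ t in Ioi (0:ℝ), ((t * Real.exp (-t) : ℝ) : ℂ) / (w - (t:ℂ)))
      (∫ t in Ioi (0:ℝ), -(((t * Real.exp (-t) : ℝ) : ℂ) / (z - (t:ℂ))^2)) z := by
  set ε := c/2 - dist z ((-c:ℝ):ℂ) with hε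
  have hεpos : 0 < ε := by
    rw [hε]; rw [Metric.mem_ball] at hz; linarith
  have hsub := subset_ball (c := c) hz
  have key := hasDerivAt_integral_of_dominated_loc_of_deriv_le (μ := volume.restrict (Ioi 0))
    (F := fun (w : ℂ) (t : ℝ) => ((t * Real.exp (-t) : ℝ) : ℂ) / (w - (t:ℂ)))
    (F' := fun (w : ℂ) (t : ℝ) => -(((t * Real.exp (-t) : ℝ) : ℂ) / (w - (t:ℂ))^2))
    (x₀ := z) (bound := fun t => t * Real.exp (-t) * (((c/2)^2)⁻¹))
    (Metric.ball_mem_nhds z hεpos) ?_ ?_ ?_ ?_ ?_ ?_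
  · exact key.2
  · filter_upwards [Metric.ball_mem_nhds z hεpos] with x hx
    have := cont_integrand hc (hsub hx) 1 1
    simpa [pow_one] using this
  · have := G_int hc hz 1 1
    simpa [pow_one] using this
  · have := (cont_integrand hc hz 2 1).neg
    exact this.congr (ae_of_all _ (fun t => by simp))
  · filter_upwards [ae_restrict_mem measurableSet_Ioi] with t ht
    intro x hx
    have hx' := hsub hx
    have h0 : (0:ℝ) < t := ht.out
    have hlb := ball_lb hc hx' h0.le
    rw [norm_neg, norm_div, norm_pow]
    have h1 : ‖((t * Real.exp (-t) : ℝ) : ℂ)‖ = t * Real.exp (-t) := by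
      rw [Complex.norm_real, Real.norm_eq_abs, abs_of_nonneg (by positivity)]
    have h2 : (c/2)^2 ≤ ‖x - (t:ℂ)‖^2 := pow_le_pow_left₀ (by positivity) hlb 2
    rw [h1, div_le_iff₀ (lt_of_lt_of_le (by positivity) h2)]
    calc t * Real.exp (-t) = (t * Real.exp (-t) * ((c/2)^2)⁻¹) * (c/2)^2 := by field_simp
      _ ≤ _ := by gcongr
  · exact integrable_texp'.mul_const _
  · filter_upwards [ae_restrict_mem measurableSet_Ioi] with t ht
    intro x hx
    have hx' := hsub hx
    have h0 : (0:ℝ) < t := ht.out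
    have hne := ball_ne hc hx' h0.le
    have hd := ((hasDerivAt_id x).sub_const (t:ℂ)).inv hne
    have hd2 := hd.const_mul ((t * Real.exp (-t) : ℝ) : ℂ)
    convert hd2 using 1
    · rfl
    · funext y
      simp only [id_eq, Pi.inv_apply]
      ring
    · simp only [id_eq]
      ring

lemma G2_hasDeriv {c : ℝ} (hc : 0 < c) :
    HasDerivAt (fun w : ℂ => ∫ t in Ioi (0:ℝ), -(((t * Real.exp (-t) : ℝ) : ℂ) / (w - (t:ℂ))^2))
      (∫ t in Ioi (0:ℝ), 2 * ((t * Real.exp (-t) : ℝ) : ℂ) / (((-c:ℝ):ℂ) - (t:ℂ))^3)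
      ((-c:ℝ):ℂ) := by
  have hmem : ((-c:ℝ):ℂ) ∈ Metric.ball ((-c : ℝ) : ℂ) (c/2) := by
    rw [Metric.mem_ball]
    simpa using by positivity
  have key := hasDerivAt_integral_of_dominated_loc_of_deriv_le (μ := volume.restrict (Ioi 0))
    (F := fun (w : ℂ) (t : ℝ) => -(((t * Real.exp (-t) : ℝ) : ℂ) / (w - (t:ℂ))^2))
    (F' := fun (w : ℂ) (t : ℝ) => 2 * ((t * Real.exp (-t) : ℝ) : ℂ) / (w - (t:ℂ))^3)
    (x₀ := ((-c:ℝ):ℂ)) (bound := fun t => t * Real.exp (-t) * (2 * ((c/2)^3)⁻¹))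
    (Metric.ball_mem_nhds ((-c:ℝ):ℂ) (by positivity : (0:ℝ) < c/2)) ?_ ?_ ?_ ?_ ?_ ?_
  · exact key.2
  · filter_upwards [Metric.ball_mem_nhds ((-c:ℝ):ℂ) (by positivity : (0:ℝ) < c/2)] with x hx
    exact (cont_integrand hc hx 2 1).neg.congr (ae_of_all _ (fun t => by simp))
  · exact ((G_int hc hmem 2 1).neg).congr (ae_of_all _ (fun t => by simp))
  · exact cont_integrand hc hmem 3 2
  · filter_upwards [ae_restrict_mem measurableSet_Ioi] with t ht
    intro x hx
    have h0 : (0:ℝ) < t := ht.out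
    have hlb := ball_lb hc hx h0.le
    rw [norm_div, norm_pow, norm_mul]
    have h1 : ‖((t * Real.exp (-t) : ℝ) : ℂ)‖ = t * Real.exp (-t) := by
      rw [Complex.norm_real, Real.norm_eq_abs, abs_of_nonneg (by positivity)]
    have h2n : ‖(2:ℂ)‖ = 2 := by norm_num
    have h2 : (c/2)^3 ≤ ‖x - (t:ℂ)‖^3 := pow_le_pow_left₀ (by positivity) hlb 3
    rw [h1, h2n, div_le_iff₀ (lt_of_lt_of_le (by positivity) h2)]
    calc 2 * (t * Real.exp (-t)) = (t * Real.exp (-t) * (2 * ((c/2)^3)⁻¹)) * (c/2)^3 := by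
          field_simp
      _ ≤ _ := by gcongr
  · exact integrable_texp'.mul_const _
  · filter_upwards [ae_restrict_mem measurableSet_Ioi] with t ht
    intro x hx
    have h0 : (0:ℝ) < t := ht.out
    have hne := ball_ne hc hx h0.le
    have hpow : (x - (t:ℂ))^2 ≠ 0 := pow_ne_zero _ hne
    have hd := (((hasDerivAt_id x).sub_const (t:ℂ)).pow 2).inv hpow
    have hd2 := hd.const_mul (-((t * Real.exp (-t) : ℝ) : ℂ))
    convert hd2 using 1
    · rfl
    · funext w
      simp only [id_eq, Pi.inv_apply, Pi.pow_apply]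
      ring
    · simp only [id_eq, Pi.pow_apply]
      field_simp
      ring

lemma H_iter2 {α c : ℝ} (hc : 0 < c) :
    iteratedDeriv 2 (Hfun α) ((-c:ℝ):ℂ)
      = (α:ℂ) * ∫ t in Ioi (0:ℝ), 2 * ((t * Real.exp (-t) : ℝ) : ℂ) / (((-c:ℝ):ℂ) - (t:ℂ))^3 := by
  have hb : (0:ℝ) < c/2 := by positivity
  have hball := Metric.ball_mem_nhds ((-c:ℝ):ℂ) hb
  have hHd : ∀ z ∈ Metric.ball ((-c:ℝ):ℂ) (c/2),
      HasDerivAt (Hfun α)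
        (1 + (α:ℂ) * ∫ t in Ioi (0:ℝ), -(((t * Real.exp (-t) : ℝ) : ℂ) / (z - (t:ℂ))^2)) z := by
    intro z hz
    have h1 := (G_hasDeriv hc hz).const_mul ((α:ℂ))
    have h2 := ((hasDerivAt_id z).add_const ((α:ℂ))).add h1
    have hfun_eq : Hfun α = fun z : ℂ => z + (α:ℂ) +
        (α:ℂ) * ∫ t in Ioi (0:ℝ), ((t * Real.exp (-t) : ℝ) : ℂ) / (z - (t:ℂ)) := rfl
    rw [hfun_eq]
    exact h2
  have hev : deriv (Hfun α) =ᶠ[nhds ((-c:ℝ):ℂ)]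
      fun z => 1 + (α:ℂ) * ∫ t in Ioi (0:ℝ), -(((t * Real.exp (-t) : ℝ) : ℂ) / (z - (t:ℂ))^2) :=
    eventually_of_mem hball (fun z hz => (hHd z hz).deriv)
  have h2' : HasDerivAt
      (fun z : ℂ => 1 + (α:ℂ) *
        ∫ t in Ioi (0:ℝ), -(((t * Real.exp (-t) : ℝ) : ℂ) / (z - (t:ℂ))^2))
      ((α:ℂ) * ∫ t in Ioi (0:ℝ), 2 * ((t * Real.exp (-t) : ℝ) : ℂ) / (((-c:ℝ):ℂ) - (t:ℂ))^3)
      ((-c:ℝ):ℂ) := ((G2_hasDeriv hc).const_mul ((α:ℂ))).const_add 1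
  rw [show (2:ℕ) = 1 + 1 from rfl, iteratedDeriv_succ, iteratedDeriv_one, hev.deriv_eq]
  exact h2'.deriv

lemma cplx_int1 {c : ℝ} :
    (∫ t in Ioi (0:ℝ), ((t * Real.exp (-t) : ℝ) : ℂ) / (((-c:ℝ):ℂ) - (t:ℂ)))
      = ((- ∫ t in Ioi (0:ℝ), t * Real.exp (-t) / (c + t) : ℝ) : ℂ) := by
  have h1 : (∫ t in Ioi (0:ℝ), ((t * Real.exp (-t) : ℝ) : ℂ) / (((-c:ℝ):ℂ) - (t:ℂ)))
      = ∫ t in Ioi (0:ℝ), ((-(t * Real.exp (-t) / (c + t)) : ℝ) : ℂ) := by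
    refine setIntegral_congr_fun measurableSet_Ioi (fun t _ => ?_)
    rw [show ((-c:ℝ):ℂ) - (t:ℂ) = -((c:ℂ) + t) by push_cast; ring, div_neg]
    push_cast
    ring
  have h2 : (∫ t in Ioi (0:ℝ), ((-(t * Real.exp (-t) / (c + t)) : ℝ) : ℂ))
      = ((∫ t in Ioi (0:ℝ), -(t * Real.exp (-t) / (c + t)) : ℝ) : ℂ) := integral_ofReal
  rw [h1, h2, integral_neg]

lemma cplx_int3 {c : ℝ} :
    (∫ t in Ioi (0:ℝ), 2 * ((t * Real.exp (-t) : ℝ) : ℂ) / (((-c:ℝ):ℂ) - (t:ℂ))^3)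
      = ((- ∫ t in Ioi (0:ℝ), 2 * (t * Real.exp (-t) / (c + t)^3) : ℝ) : ℂ) := by
  have h1 : (∫ t in Ioi (0:ℝ), 2 * ((t * Real.exp (-t) : ℝ) : ℂ) / (((-c:ℝ):ℂ) - (t:ℂ))^3)
      = ∫ t in Ioi (0:ℝ), ((-(2 * (t * Real.exp (-t) / (c + t)^3)) : ℝ) : ℂ) := by
    refine setIntegral_congr_fun measurableSet_Ioi (fun t _ => ?_)
    rw [show ((-c:ℝ):ℂ) - (t:ℂ) = -((c:ℂ) + t) by push_cast; ring,
      show (-((c:ℂ) + t))^3 = -(((c:ℂ) + t)^3) by ring, div_neg]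
    push_cast
    ring
  have h2 : (∫ t in Ioi (0:ℝ), ((-(2 * (t * Real.exp (-t) / (c + t)^3)) : ℝ) : ℂ))
      = ((∫ t in Ioi (0:ℝ), -(2 * (t * Real.exp (-t) / (c + t)^3)) : ℝ) : ℂ) := integral_ofReal
  rw [h1, h2, integral_neg]


/-- `s_α = (c_α/(1+c_α))(α − c_α)` and
`H_α″(-c_α) = 1 − s_α/c_α² < 0`. -/
theorem free_gamma_s_formula_and_H_second_deriv
    (α : ℝ) (hα : 0 < α) (c : ℝ) (hc : 0 < c)
    (hceq : (∫ t in Set.Ioi (0:ℝ), t * Real.exp (-t) / (c + t)^2) = 1/α)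
    (s : ℝ) (hs : (s : ℂ) = Hfun α ((-c : ℝ) : ℂ)) :
    s = (c / (1 + c)) * (α - c) ∧
    iteratedDeriv 2 (Hfun α) ((-c : ℝ) : ℂ) = ((1 - s / c^2 : ℝ) : ℂ) ∧
    1 - s / c^2 < 0 := by
  have int1 : IntegrableOn (fun t => Real.exp (-t) / (c + t)) (Ioi 0) :=
    (integrable_exp_div_pow hc 1).congr_fun (fun x _ => by beta_reduce; rw [pow_one]) measurableSet_Ioi
  have int2 := integrable_exp_div_pow hc 2
  have int3 := integrable_exp_div_pow hc 3
  have tint1 : IntegrableOn (fun t => t * Real.exp (-t) / (c + t)) (Ioi 0) :=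
    (integrable_texp_div_pow hc 1).congr_fun (fun x _ => by beta_reduce; rw [pow_one]) measurableSet_Ioi
  obtain ⟨I1, hI1⟩ : ∃ x : ℝ, (∫ t in Ioi (0:ℝ), Real.exp (-t) / (c + t)) = x := ⟨_, rfl⟩
  obtain ⟨I2, hI2⟩ : ∃ x : ℝ, (∫ t in Ioi (0:ℝ), Real.exp (-t) / (c + t)^2) = x := ⟨_, rfl⟩
  obtain ⟨I3, hI3⟩ : ∃ x : ℝ, (∫ t in Ioi (0:ℝ), Real.exp (-t) / (c + t)^3) = x := ⟨_, rfl⟩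
  obtain ⟨J1, hJ1d⟩ : ∃ x : ℝ, (∫ t in Ioi (0:ℝ), t * Real.exp (-t) / (c + t)) = x := ⟨_, rfl⟩
  obtain ⟨J3, hJ3d⟩ : ∃ x : ℝ, (∫ t in Ioi (0:ℝ), t * Real.exp (-t) / (c + t)^3) = x := ⟨_, rfl⟩
  have hp1 : I1 + I2 = 1/c := by rw [← hI1, ← hI2]; exact parts1 hc int1 int2
  have hp2 : I2/2 + I3 = 1/(2*c^2) := by rw [← hI2, ← hI3]; exact parts2 hc int2 int3
  have hJ1 : J1 = 1 - c*I1 := by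
    rw [← hJ1d, ← hI1]; exact split_tdiv hc exp_integrableOn int1
  have hkey : I1 - c*I2 = 1/α := by
    rw [← hI1, ← hI2, ← split_tdiv2 hc int1 int2]; exact hceq
  have hJ3 : J3 = I2 - c*I3 := by
    rw [← hJ3d, ← hI2, ← hI3]; exact split_tdiv3 hc int2 int3
  have hCS : I1^2 ≤ I2 := CSineq hc int1 int2 I1 I2 hI1 hI2
  have hc0 : c ≠ 0 := ne_of_gt hc
  have hα0 : α ≠ 0 := ne_of_gt hα
  have h1c : (0:ℝ) < 1 + c := by linarith
  have h1c0 : (1:ℝ) + c ≠ 0 := ne_of_gt h1c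
  -- polynomial forms
  have hp1' : c*(I1 + I2) = 1 := by rw [hp1]; field_simp
  have hp2' : 2*c^2*(I2/2 + I3) = 1 := by rw [hp2]; field_simp
  have hkey' : α*(I1 - c*I2) = 1 := by rw [hkey]; field_simp
  have hB : α*(1+c)*I1 = α + 1 := by linear_combination hkey' + α*hp1'
  -- value of s
  have hHv : Hfun α ((-c:ℝ):ℂ) = ((-c:ℝ):ℂ) + (α:ℂ) + (α:ℂ) * ((-J1 : ℝ):ℂ) := by
    have e : Hfun α ((-c:ℝ):ℂ) = ((-c:ℝ):ℂ) + (α:ℂ) +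
        (α:ℂ) * ∫ t in Ioi (0:ℝ), ((t * Real.exp (-t):ℝ):ℂ) / (((-c:ℝ):ℂ) - (t:ℂ)) := rfl
    rw [e, cplx_int1, hJ1d]
  have hsr : s = -c + α + α * (-J1) := by
    have h2 : (s:ℂ) = ((-c + α + α * (-J1) : ℝ):ℂ) := by rw [hs, hHv]; push_cast; ring
    exact_mod_cast h2
  have hA : s = -c + α*(c*I1) := by rw [hsr, hJ1]; ring
  -- first conclusion
  have goal1 : s = (c / (1 + c)) * (α - c) := by
    rw [div_mul_eq_mul_div, eq_div_iff h1c0]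
    linear_combination (1+c)*hA + c*hB
  refine ⟨goal1, ?_, ?_⟩
  · -- second derivative
    have hiter := H_iter2 (α := α) (c := c) hc
    rw [cplx_int3] at hiter
    have hsplit : (∫ t in Ioi (0:ℝ), 2 * (t * Real.exp (-t) / (c + t)^3)) = 2*J3 := by
      rw [integral_const_mul, hJ3d]
    rw [hsplit] at hiter
    have hval2 : c^2*(α*(-(2*J3))) = c^2 - s := by
      linear_combination (-2*α*c^2)*hJ3 + (α*c)*hp2' - (α*c*(2+c))*hp1' + (c*(1+c))*hB + hA
    have hval : α*(-(2*J3)) = 1 - s/c^2 := by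
      field_simp
      linear_combination hval2
    rw [hiter, ← hval]
    push_cast
    ring
  · -- negativity
    have hq : I1^2 + I1 ≤ 1/c := by linarith
    have hm : c*(α*(1+c))^2 * (I1^2 + I1) ≤ c*(α*(1+c))^2 * (1/c) :=
      mul_le_mul_of_nonneg_left hq (by positivity)
    have e1 : c*(α*(1+c))^2 * (I1^2 + I1) = c*((α+1)^2 + α*(1+c)*(α+1)) := by
      linear_combination (c*(α*(1+c)*I1 + α + 1) + c*α*(1+c))*hB
    have e2 : c*(α*(1+c))^2 * (1/c) = α^2*(1+c)^2 := by field_simp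
    have hpoly : c*((α+1)^2 + α*(1+c)*(α+1)) ≤ α^2*(1+c)^2 := by
      rw [← e1, ← e2]; exact hm
    have hgt : c^2 + 2*c < α := by
      by_contra h
      push_neg at h
      nlinarith [hpoly, mul_le_mul_of_nonneg_left h hα.le, mul_pos hα hc]
    have e3 : 1 - s/c^2 = (c^2 + 2*c - α)/(c*(1+c)) := by
      rw [goal1]
      field_simp
      ring
    rw [e3]
    apply div_neg_of_neg_of_pos
    · linarith
    · positivity
end
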